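/- Let Θ be a real random variable with |Θ| ≤ some a.s. bound and E[|Θ|^α] < ∞ for α > 0, and Y₀ an independent Pareto(α) random variable (P(Y₀ > y) = y^{-α}, y ≥ 1). Then E[log⁺(Y₀·|Θ|)] = E[(|Θ|^α ∧ 1)·(log⁺|Θ| + 1/α)]. -/

import Mathlib

open MeasureTheory ProbabilityTheory

open Set Filter

lemma lint_exp_aux (α : ℝ) (hα : 0 < α) (c : ℝ) :
    ∫⁻ s in Set.Ioi c, ENNReal.ofReal (Real.exp (-α * s))
      = ENNReal.ofReal (Real.exp (-α * c) / α) := by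
  have hint : IntegrableOn (fun s => Real.exp (-α * s)) (Set.Ioi c) :=
    exp_neg_integrableOn_Ioi c hα
  rw [← ofReal_integral_eq_lintegral_ofReal hint
      (Filter.Eventually.of_forall fun s => (Real.exp_pos _).le)]
  congr 1
  have hderiv : ∀ x ∈ Set.Ici c,
      HasDerivAt (fun s => -(Real.exp (-α * s) / α)) (Real.exp (-α * x)) x := by
    intro x _
    have h := (((hasDerivAt_id x).const_mul (-α)).exp.div_const α).neg
    have h2 : (fun s => -(Real.exp (-α * s) / α)) = -fun x => Real.exp (-α * id x) / α := by
      ext s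
      simp
    rw [h2]
    refine h.congr_deriv ?_
    simp only [id]
    field_simp
  have htend : Tendsto (fun s => -(Real.exp (-α * s) / α)) atTop (nhds 0) := by
    have h1 : Tendsto (fun s : ℝ => -α * s) atTop atBot :=
      tendsto_id.const_mul_atTop_of_neg (neg_neg_iff_pos.2 hα)
    have := ((Real.tendsto_exp_atBot.comp h1).div_const α).neg
    simpa using this
  have := integral_Ioi_of_hasDerivAt_of_tendsto' (f' := fun s => Real.exp (-α * s))
      hderiv hint htend
  rw [this]
  ring

lemma pareto_logplus (α : ℝ) (hα : 0 < α) (ν : Measure ℝ) [IsProbabilityMeasure ν]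
    (hsurv : ∀ a : ℝ, 1 ≤ a → ν (Set.Ioi a) = ENNReal.ofReal (a ^ (-α)))
    (hae : ∀ᵐ y ∂ν, 1 ≤ y) (t : ℝ) (ht : 0 ≤ t) :
    ∫⁻ y, ENNReal.ofReal (max (Real.log (y * t)) 0) ∂ν
      = ENNReal.ofReal (min (t ^ α) 1 * (max (Real.log t) 0 + 1 / α)) := by
  rcases eq_or_lt_of_le ht with h0 | h0
  · -- t = 0
    simp [← h0, Real.zero_rpow hα.ne']
  -- t > 0
  have hm : AEMeasurable (fun y : ℝ => max (Real.log (y * t)) 0) ν :=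
    ((Real.measurable_log.comp (measurable_id.mul_const t)).max measurable_const).aemeasurable
  rw [lintegral_eq_lintegral_meas_lt ν (f := fun y : ℝ => max (Real.log (y * t)) 0)
      (Filter.Eventually.of_forall fun y => le_max_right _ _) hm]
  -- ν vanishes off Ici 1
  have hnull : ν {y : ℝ | ¬ 1 ≤ y} = 0 := by
    simpa [ae_iff] using hae
  have hinter : ∀ S : Set ℝ, ν S = ν (S ∩ Set.Ici 1) := by
    intro S
    refine le_antisymm ?_ (measure_mono Set.inter_subset_left)
    calc ν S = ν (S ∩ Set.Ici 1 ∪ S \ Set.Ici 1) := by rw [Set.inter_union_diff]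
      _ ≤ ν (S ∩ Set.Ici 1) + ν (S \ Set.Ici 1) := measure_union_le _ _
      _ = ν (S ∩ Set.Ici 1) := by
          have hz : ν (S \ Set.Ici 1) = 0 := measure_mono_null (fun y hy => hy.2) hnull
          rw [hz, add_zero]
  have hIci : ν (Set.Ici 1) = 1 := by
    have := hinter Set.univ
    simpa using this.symm
  -- value of the survival at each level s > 0
  have key : ∀ s ∈ Set.Ioi (0:ℝ),
      ν {y : ℝ | s < max (Real.log (y * t)) 0}
        = ENNReal.ofReal (min (t ^ α * Real.exp (-α * s)) 1) := by
    intro s hs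
    have hs0 : (0:ℝ) < s := hs
    set a : ℝ := Real.exp s / t with ha
    have ha0 : 0 < a := div_pos (Real.exp_pos s) h0
    have hval : t ^ α * Real.exp (-α * s) = a ^ (-α) := by
      rw [ha, Real.div_rpow (Real.exp_pos s).le ht, Real.rpow_neg (Real.exp_pos s).le,
        Real.rpow_neg ht, Real.rpow_def_of_pos (Real.exp_pos s), Real.log_exp]
      rw [div_eq_mul_inv, inv_inv, mul_comm]
      congr 1
      rw [← Real.exp_neg]
      ring_nf
    have hset1 : {y : ℝ | s < max (Real.log (y * t)) 0} = {y : ℝ | s < Real.log (y * t)} := by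
      ext y
      simp only [Set.mem_setOf_eq, lt_max_iff]
      constructor
      · rintro (h | h)
        · exact h
        · linarith
      · exact Or.inl
    have hset2 : {y : ℝ | s < Real.log (y * t)} ∩ Set.Ici 1 = Set.Ioi a ∩ Set.Ici 1 := by
      ext y
      simp only [Set.mem_inter_iff, Set.mem_setOf_eq, Set.mem_Ioi, Set.mem_Ici]
      constructor
      · rintro ⟨h1, h2⟩
        refine ⟨?_, h2⟩
        have hyt : 0 < y * t := mul_pos (lt_of_lt_of_le one_pos h2) h0
        rw [Real.lt_log_iff_exp_lt hyt] at h1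
        rw [ha, div_lt_iff₀ h0]
        exact h1
      · rintro ⟨h1, h2⟩
        refine ⟨?_, h2⟩
        have hyt : 0 < y * t := mul_pos (lt_of_lt_of_le one_pos h2) h0
        rw [Real.lt_log_iff_exp_lt hyt]
        rw [ha, div_lt_iff₀ h0] at h1
        exact h1
    rw [hset1, hinter _, hset2]
    rw [hval]
    by_cases hA : 1 ≤ a
    · have : Set.Ioi a ⊆ Set.Ici 1 := fun y hy => le_trans hA (le_of_lt hy)
      rw [Set.inter_eq_left.2 this, hsurv a hA]
      congr 1
      exact (min_eq_left (Real.rpow_le_one_of_one_le_of_nonpos hA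
        (neg_nonpos.2 hα.le))).symm
    · push_neg at hA
      have : Set.Ici 1 ⊆ Set.Ioi a := fun y hy => lt_of_lt_of_le hA hy
      rw [Set.inter_eq_right.2 this, hIci]
      have h1 : (1:ℝ) ≤ a ^ (-α) :=
        Real.one_le_rpow_of_pos_of_le_one_of_nonpos ha0 hA.le (neg_nonpos.2 hα.le)
      rw [min_eq_right h1]
      simp
  rw [setLIntegral_congr_fun measurableSet_Ioi key]
  -- now compute the integral of min (t^α e^{-αs}) 1 over Ioi 0
  by_cases h1 : t ≤ 1
  · -- small t
    have hmin : ∀ s ∈ Set.Ioi (0:ℝ),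
        ENNReal.ofReal (min (t ^ α * Real.exp (-α * s)) 1)
          = ENNReal.ofReal (t ^ α) * ENNReal.ofReal (Real.exp (-α * s)) := by
      intro s hs
      have hs0 : (0:ℝ) < s := hs
      have he : Real.exp (-α * s) ≤ 1 := by
        rw [Real.exp_le_one_iff]
        nlinarith
      have htα : t ^ α ≤ 1 := Real.rpow_le_one ht h1 hα.le
      rw [min_eq_left (by nlinarith [Real.rpow_nonneg ht α, (Real.exp_pos (-α * s)).le]),
        ENNReal.ofReal_mul (Real.rpow_nonneg ht α)]
    rw [setLIntegral_congr_fun measurableSet_Ioi hmin,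
      lintegral_const_mul' _ _ ENNReal.ofReal_ne_top, lint_exp_aux α hα 0]
    rw [← ENNReal.ofReal_mul (Real.rpow_nonneg ht α)]
    congr 1
    rw [min_eq_left (Real.rpow_le_one ht h1 hα.le),
      max_eq_right (Real.log_nonpos ht h1)]
    simp
  · push_neg at h1
    set L := Real.log t with hL
    have hL0 : 0 < L := Real.log_pos h1
    have htL : Real.exp (-α * L) = t ^ (-α) := by
      rw [Real.rpow_def_of_pos h0]
      ring_nf
      rw [hL]
    have htt : t ^ α * t ^ (-α) = 1 := by
      rw [← Real.rpow_add h0]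
      simp
    have hsplit : Set.Ioi (0:ℝ) = Set.Ioc 0 L ∪ Set.Ioi L := (Set.Ioc_union_Ioi_eq_Ioi hL0.le).symm
    rw [hsplit, lintegral_union measurableSet_Ioi (Set.Ioc_disjoint_Ioi le_rfl)]
    have hIoc : ∫⁻ s in Set.Ioc 0 L, ENNReal.ofReal (min (t ^ α * Real.exp (-α * s)) 1)
        = ENNReal.ofReal L := by
      have hmin : ∀ s ∈ Set.Ioc (0:ℝ) L,
          ENNReal.ofReal (min (t ^ α * Real.exp (-α * s)) 1) = 1 := by
        intro s hs
        have h2 : Real.exp (-α * L) ≤ Real.exp (-α * s) := by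
          rw [Real.exp_le_exp]
          nlinarith [hs.2]
        have : (1:ℝ) ≤ t ^ α * Real.exp (-α * s) := by
          calc (1:ℝ) = t ^ α * t ^ (-α) := htt.symm
            _ = t ^ α * Real.exp (-α * L) := by rw [htL]
            _ ≤ t ^ α * Real.exp (-α * s) :=
                mul_le_mul_of_nonneg_left h2 (Real.rpow_nonneg h0.le α)
        rw [min_eq_right this]
        simp
      rw [setLIntegral_congr_fun measurableSet_Ioc hmin,
        setLIntegral_const, one_mul, Real.volume_Ioc]
      simp
    have hIoi : ∫⁻ s in Set.Ioi L, ENNReal.ofReal (min (t ^ α * Real.exp (-α * s)) 1)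
        = ENNReal.ofReal (1 / α) := by
      have hmin : ∀ s ∈ Set.Ioi L,
          ENNReal.ofReal (min (t ^ α * Real.exp (-α * s)) 1)
            = ENNReal.ofReal (t ^ α) * ENNReal.ofReal (Real.exp (-α * s)) := by
        intro s hs
        have hs0 : L < s := hs
        have h2 : Real.exp (-α * s) ≤ Real.exp (-α * L) := by
          rw [Real.exp_le_exp]
          nlinarith
        have : t ^ α * Real.exp (-α * s) ≤ 1 := by
          calc t ^ α * Real.exp (-α * s) ≤ t ^ α * Real.exp (-α * L) :=
                mul_le_mul_of_nonneg_left h2 (Real.rpow_nonneg h0.le α)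
            _ = t ^ α * t ^ (-α) := by rw [htL]
            _ = 1 := htt
        rw [min_eq_left this, ENNReal.ofReal_mul (Real.rpow_nonneg h0.le α)]
      rw [setLIntegral_congr_fun measurableSet_Ioi hmin,
        lintegral_const_mul' _ _ ENNReal.ofReal_ne_top, lint_exp_aux α hα L,
        ← ENNReal.ofReal_mul (Real.rpow_nonneg h0.le α)]
      congr 1
      rw [htL]
      field_simp
      rw [mul_comm, ← Real.rpow_add h0]
      simp
    rw [hIoc, hIoi, ← ENNReal.ofReal_add hL0.le (by positivity)]
    congr 1
    rw [min_eq_right (Real.one_le_rpow h1.le hα.le), max_eq_left hL0.le]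
    ring
theorem logplus_product_pareto
    {Ω : Type*} [MeasureSpace Ω] (μ : Measure Ω) [IsProbabilityMeasure μ]
    (α : ℝ) (hα : 0 < α)
    (Y Θ : Ω → ℝ) (hYm : Measurable Y) (hΘm : Measurable Θ)
    (hIndep : IndepFun Y Θ μ)
    (hSurv : ∀ y : ℝ, 1 ≤ y → μ {ω | y < Y ω} = ENNReal.ofReal (y ^ (-α)))
    (hYge : ∀ᵐ ω ∂μ, 1 ≤ Y ω)
    (hBdd : ∃ B : ℝ, ∀ᵐ ω ∂μ, |Θ ω| ≤ B)
    (hIntPow : Integrable (fun ω => |Θ ω| ^ α) μ)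
    (hIntRHS : Integrable
      (fun ω => min (|Θ ω| ^ α) 1 * (max (Real.log |Θ ω|) 0 + 1 / α)) μ) :
    ∫ ω, max (Real.log (Y ω * |Θ ω|)) 0 ∂μ
      = ∫ ω, min (|Θ ω| ^ α) 1 * (max (Real.log |Θ ω|) 0 + 1 / α) ∂μ := by
  have hT : Measurable fun ω => |Θ ω| := hΘm.abs
  have hLnn : ∀ ω, 0 ≤ max (Real.log (Y ω * |Θ ω|)) 0 := fun ω => le_max_right _ _
  have hRnn : ∀ ω, 0 ≤ min (|Θ ω| ^ α) 1 * (max (Real.log |Θ ω|) 0 + 1 / α) := by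
    intro ω
    apply mul_nonneg
    · exact le_min (Real.rpow_nonneg (abs_nonneg _) α) zero_le_one
    · exact add_nonneg (le_max_right _ _) (by positivity)
  have hLm : Measurable fun ω => max (Real.log (Y ω * |Θ ω|)) 0 :=
    (Real.measurable_log.comp (hYm.mul hT)).max measurable_const
  have hgm : Measurable fun θ : ℝ => min (|θ| ^ α) 1 * (max (Real.log |θ|) 0 + 1 / α) := by
    apply Measurable.mul
    · exact ((continuous_abs.rpow_const (fun x => Or.inr hα.le)).measurable).min measurable_const
    · exact ((Real.measurable_log.comp measurable_id.abs).max measurable_const).add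
        measurable_const
  have hRm : Measurable fun ω => min (|Θ ω| ^ α) 1 * (max (Real.log |Θ ω|) 0 + 1 / α) :=
    hgm.comp hΘm
  rw [integral_eq_lintegral_of_nonneg_ae (Filter.Eventually.of_forall hLnn)
      hLm.aestronglyMeasurable,
    integral_eq_lintegral_of_nonneg_ae (Filter.Eventually.of_forall hRnn)
      hRm.aestronglyMeasurable]
  congr 1
  have hmap : μ.map (fun ω => (Y ω, Θ ω)) = (μ.map Y).prod (μ.map Θ) :=
    (indepFun_iff_map_prod_eq_prod_map_map hYm.aemeasurable hΘm.aemeasurable).mp hIndep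
  have hprobY : IsProbabilityMeasure (μ.map Y) := Measure.isProbabilityMeasure_map hYm.aemeasurable
  have hprobΘ : IsProbabilityMeasure (μ.map Θ) := Measure.isProbabilityMeasure_map hΘm.aemeasurable
  have hsurv' : ∀ a : ℝ, 1 ≤ a → (μ.map Y) (Set.Ioi a) = ENNReal.ofReal (a ^ (-α)) := by
    intro a ha
    rw [Measure.map_apply hYm measurableSet_Ioi]
    exact hSurv a ha
  have hae' : ∀ᵐ y ∂(μ.map Y), 1 ≤ y :=
    (ae_map_iff hYm.aemeasurable measurableSet_Ici).2 hYge
  have hFm : Measurable fun p : ℝ × ℝ => ENNReal.ofReal (max (Real.log (p.1 * |p.2|)) 0) :=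
    ENNReal.measurable_ofReal.comp
      ((Real.measurable_log.comp (measurable_fst.mul measurable_snd.abs)).max measurable_const)
  calc ∫⁻ ω, ENNReal.ofReal (max (Real.log (Y ω * |Θ ω|)) 0) ∂μ
      = ∫⁻ p, ENNReal.ofReal (max (Real.log (p.1 * |p.2|)) 0)
          ∂(μ.map fun ω => (Y ω, Θ ω)) := by
        rw [lintegral_map hFm (hYm.prodMk hΘm)]
    _ = ∫⁻ θ, (∫⁻ y, ENNReal.ofReal (max (Real.log (y * |θ|)) 0) ∂(μ.map Y))
          ∂(μ.map Θ) := by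
        rw [hmap, lintegral_prod_symm _ hFm.aemeasurable]
    _ = ∫⁻ θ, ENNReal.ofReal (min (|θ| ^ α) 1 * (max (Real.log |θ|) 0 + 1 / α))
          ∂(μ.map Θ) :=
        lintegral_congr fun θ =>
          pareto_logplus α hα (μ.map Y) hsurv' hae' |θ| (abs_nonneg θ)
    _ = ∫⁻ ω, ENNReal.ofReal (min (|Θ ω| ^ α) 1
          * (max (Real.log |Θ ω|) 0 + 1 / α)) ∂μ := by
        rw [lintegral_map (f := fun θ : ℝ =>
          ENNReal.ofReal (min (|θ| ^ α) 1 * (max (Real.log |θ|) 0 + 1 / α)))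
          (ENNReal.measurable_ofReal.comp hgm) hΘm]
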